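/- Let X be a continuum such that for every open cover 𝒰 of X with |𝒰| ≤ 3 there exists a 𝒰-map from X onto a tree. Then every continuous map f : X → S¹ is null-homotopic. -/

import Mathlib

/-- The geometric realization of a combinatorial graph on `Fin n`, with vertices at the
standard basis vectors of `ℝⁿ` and edges the straight segments joining adjacent
vertices. -/
def graphRealization (n : ℕ) (G : SimpleGraph (Fin n)) : Set (Fin n → ℝ) :=
  (Set.range fun i : Fin n => fun j => if j = i then (1 : ℝ) else 0) ∪
    ⋃ (p : Fin n × Fin n) (_ : G.Adj p.1 p.2),
      segment ℝ (fun j => if j = p.1 then (1 : ℝ) else 0)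
        (fun j => if j = p.2 then (1 : ℝ) else 0)

/-- A topological space is a tree if it is homeomorphic to the geometric realization of a
finite connected acyclic combinatorial graph. -/
def IsTree (K : Type*) [TopologicalSpace K] : Prop :=
  ∃ (n : ℕ) (G : SimpleGraph (Fin n)), G.Connected ∧ G.IsAcyclic ∧
    Nonempty (K ≃ₜ graphRealization n G)

open Complex Set

noncomputable section Aux13

/-- clamp to [0,1] -/
def clamp13 (t : ℝ) : ℝ := max 0 (min 1 t)

lemma clamp13_mem (t : ℝ) : clamp13 t ∈ Icc (0:ℝ) 1 :=
  ⟨le_max_left _ _, max_le (by norm_num) (min_le_left _ _)⟩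

lemma clamp13_of_mem {t : ℝ} (h : t ∈ Icc (0:ℝ) 1) : clamp13 t = t := by
  simp only [clamp13, min_eq_right h.2, max_eq_right h.1]

lemma clamp13_clamp (t : ℝ) : clamp13 (clamp13 t) = clamp13 t :=
  clamp13_of_mem (clamp13_mem t)

lemma clamp13_one_sub (t : ℝ) : clamp13 (1 - t) = 1 - clamp13 t := by
  rcases le_total t 0 with h | h
  · have h2 : clamp13 t = 0 := by
      simp [clamp13, min_eq_right (le_trans h (by norm_num : (0:ℝ) ≤ 1)), max_eq_left h]
    rw [h2]
    simp only [clamp13]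
    rw [min_eq_left (by linarith), max_eq_right (by norm_num)]
    ring
  rcases le_total 1 t with h1 | h1
  · have h2 : clamp13 t = 1 := by simp [clamp13, min_eq_left h1]
    rw [h2]
    simp only [clamp13]
    rw [min_eq_right (by linarith), max_eq_left (by linarith)]
    ring
  · rw [clamp13_of_mem ⟨by linarith, by linarith⟩, clamp13_of_mem ⟨h, h1⟩]

lemma clamp13_continuous : Continuous clamp13 :=
  continuous_const.max (continuous_const.min continuous_id)

lemma expArg13 {z : ℂ} (hz : ‖z‖ = 1) : Complex.exp (z.arg * I) = z := by
  have h := Complex.norm_mul_exp_arg_mul_I z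
  rw [hz] at h
  simpa using h

lemma mulconj13 {z : ℂ} (hz : ‖z‖ = 1) : z * (starRingEnd ℂ) z = 1 := by
  rw [Complex.mul_conj]
  norm_cast
  rw [← Complex.sq_norm, hz]; norm_num

lemma normSq13 {z : ℂ} (hz : ‖z‖ = 1) : z.re ^ 2 + z.im ^ 2 = 1 := by
  have h : Complex.normSq z = 1 := by
    rw [← Complex.sq_norm, hz]; norm_num
  rw [Complex.normSq_apply] at h; nlinarith [h]

lemma re_mulconj_pos13 {z w : ℂ} (hz : ‖z‖ = 1) (hw : ‖w‖ = 1) (hd : dist z w < 1) :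
    (1:ℝ)/2 < (z * (starRingEnd ℂ) w).re := by
  have h1 := normSq13 hz
  have h2 := normSq13 hw
  have hd2 : Complex.normSq (z - w) < 1 := by
    have he : dist z w = ‖z - w‖ := Complex.dist_eq z w
    have habs : ‖z - w‖ < 1 := by rw [← he]; exact hd
    have hsq := Complex.sq_norm (z - w)
    nlinarith [norm_nonneg (z - w)]
  rw [Complex.normSq_apply] at hd2
  simp only [Complex.mul_re, Complex.conj_re, Complex.conj_im, Complex.sub_re,
    Complex.sub_im] at *
  nlinarith

/-- Existence of lifts for clamped unit-circle valued paths. -/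
lemma existsLift13 (γ : ℝ → ℂ) (hcont : Continuous γ) (hnorm : ∀ t, ‖γ t‖ = 1)
    (hcl : ∀ t, γ t = γ (clamp13 t)) :
    ∃ ℓ : ℝ → ℝ, Continuous ℓ ∧ ∀ t, γ t = Complex.exp (ℓ t * I) := by
  have huc : UniformContinuousOn γ (Icc 0 1) :=
    isCompact_Icc.uniformContinuousOn_of_continuous hcont.continuousOn
  rw [Metric.uniformContinuousOn_iff] at huc
  obtain ⟨δ, hδ0, hδ⟩ := huc 1 (by norm_num)
  obtain ⟨m, hm⟩ := exists_nat_gt (1/δ)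
  have hmpos : (0:ℝ) < m := lt_trans (by positivity) hm
  have hinv : (1:ℝ)/m < δ := by
    rw [div_lt_iff₀ hmpos]
    rw [div_lt_iff₀ hδ0] at hm
    linarith [hm]
  set c : ℕ → ℝ → ℝ := fun j t => max ((j:ℝ)/m) (min t (((j:ℝ)+1)/m)) with hc
  set q : ℕ → ℝ → ℂ := fun j t => γ (c j t) * (starRingEnd ℂ) (γ ((j:ℝ)/m)) with hq
  have hstep : ∀ j : ℕ, (j:ℝ)/m ≤ ((j:ℝ)+1)/m := by
    intro j
    exact (div_le_div_iff_of_pos_right hmpos).mpr (by linarith)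
  have hnode : ∀ j : ℕ, (j:ℝ) ≤ m → (j:ℝ)/m ∈ Icc (0:ℝ) 1 := by
    intro j hj
    exact ⟨by positivity, by rw [div_le_one hmpos]; exact hj⟩
  have hcmem : ∀ (j : ℕ) (t : ℝ), c j t ∈ Icc ((j:ℝ)/m) (((j:ℝ)+1)/m) :=
    fun j t => ⟨le_max_left _ _, max_le (hstep j) (min_le_right _ _)⟩
  have hcmem01 : ∀ j : ℕ, j < m → ∀ t, c j t ∈ Icc (0:ℝ) 1 := by
    intro j hj t
    have h1 := hcmem j t
    have h2 := hnode j (by exact_mod_cast le_of_lt hj)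
    have h3 : ((j:ℝ)+1)/m ≤ 1 := by
      rw [div_le_one hmpos]
      have : (j:ℝ)+1 ≤ m := by exact_mod_cast hj
      exact this
    exact ⟨le_trans h2.1 h1.1, le_trans h1.2 h3⟩
  have hqre : ∀ j : ℕ, j < m → ∀ t, (1:ℝ)/2 < (q j t).re := by
    intro j hj t
    apply re_mulconj_pos13 (hnorm _) (hnorm _)
    apply hδ _ (hcmem01 j hj t) _ (hnode j (by exact_mod_cast le_of_lt hj))
    rw [Real.dist_eq]
    have h1 := hcmem j t
    have habs : |c j t - (j:ℝ)/m| ≤ 1/m := by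
      rw [abs_le]
      have hd : ((j:ℝ)+1)/m - (j:ℝ)/m = 1/m := by field_simp; ring
      constructor
      · have : (0:ℝ) < 1/m := by positivity
        linarith [h1.1]
      · linarith [h1.2]
    linarith
  set ℓ : ℝ → ℝ := fun t => (γ 0).arg + ∑ j ∈ Finset.range m, (q j t).arg with hℓ
  have hqcont : ∀ j : ℕ, Continuous fun t => q j t := by
    intro j
    apply Continuous.mul ?_ continuous_const
    exact hcont.comp (continuous_const.max (continuous_id.min continuous_const))
  have hℓcont : Continuous ℓ := by
    apply Continuous.add continuous_const
    apply continuous_finset_sum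
    intro j hj
    rw [Finset.mem_range] at hj
    rw [continuous_iff_continuousAt]
    intro t
    exact (Complex.continuousAt_arg (Or.inl (lt_trans (by norm_num) (hqre j hj t)))).comp
      (hqcont j).continuousAt
  have key : ∀ t ∈ Icc (0:ℝ) 1, γ t = Complex.exp (ℓ t * I) := by
    intro t ht
    have tele : ∀ k : ℕ, k ≤ m →
        γ 0 * ∏ j ∈ Finset.range k, q j t = γ (min t ((k:ℝ)/m)) := by
      intro k hk
      induction k with
      | zero =>
        simp only [Finset.range_zero, Finset.prod_empty, mul_one, Nat.cast_zero, zero_div]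
        rw [min_eq_right ht.1]
      | succ k ih =>
        have hkm : k < m := lt_of_lt_of_le (Nat.lt_succ_self k) hk
        have ih' := ih (le_of_lt hkm)
        rw [Finset.prod_range_succ, ← mul_assoc, ih']
        have hcast : ((k+1:ℕ):ℝ)/m = ((k:ℝ)+1)/m := by push_cast; ring
        rw [hcast]
        rcases le_total t ((k:ℝ)/m) with hle | hle
        · have h1 : min t ((k:ℝ)/m) = t := min_eq_left hle
          have h3 : min t (((k:ℝ)+1)/m) = t := min_eq_left (le_trans hle (hstep k))
          have h2 : c k t = (k:ℝ)/m := by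
            rw [hc]
            simp only []
            rw [h3, max_eq_left hle]
          rw [h1, hq]
          simp only []
          rw [h2, mulconj13 (hnorm _), mul_one, h3]
        · have h1 : min t ((k:ℝ)/m) = (k:ℝ)/m := min_eq_right hle
          have h2 : c k t = min t (((k:ℝ)+1)/m) := by
            rw [hc]
            simp only []
            exact max_eq_right (le_min hle (hstep k))
          rw [h1, hq]
          simp only []
          rw [h2, mul_comm (γ (min t (((k:ℝ)+1)/m))) ((starRingEnd ℂ) (γ ((k:ℝ)/m))),
            ← mul_assoc, mulconj13 (hnorm _), one_mul]
    have htele := tele m le_rfl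
    rw [div_self (ne_of_gt hmpos), min_eq_left ht.2] at htele
    rw [hℓ]
    simp only []
    push_cast
    rw [add_mul, Complex.exp_add]
    rw [Finset.sum_mul, Complex.exp_sum]
    rw [expArg13 (hnorm 0)]
    rw [← htele]
    congr 1
    apply Finset.prod_congr rfl
    intro j _
    rw [expArg13]
    rw [hq]
    simp only []
    rw [norm_mul, RCLike.norm_conj, hnorm, hnorm, one_mul]
  refine ⟨fun t => ℓ (clamp13 t), hℓcont.comp clamp13_continuous, fun t => ?_⟩
  rw [hcl t]
  exact key _ (clamp13_mem t)

/-- Uniqueness of lifts with the same starting value. -/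
lemma liftUnique13 {ℓ₁ ℓ₂ : ℝ → ℝ} (h₁ : Continuous ℓ₁) (h₂ : Continuous ℓ₂)
    (he : ∀ t, Complex.exp (ℓ₁ t * I) = Complex.exp (ℓ₂ t * I)) (h0 : ℓ₁ 0 = ℓ₂ 0) :
    ∀ t, ℓ₁ t = ℓ₂ t := by
  have hint : ∀ t, ∃ k : ℤ, ℓ₁ t - ℓ₂ t = k * (2 * Real.pi) := by
    intro t
    have h := he t
    have h1 : Complex.exp ((ℓ₁ t - ℓ₂ t : ℝ) * I) = 1 := by
      push_cast
      rw [sub_mul, Complex.exp_sub, h, div_self (Complex.exp_ne_zero _)]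
    rw [Complex.exp_eq_one_iff] at h1
    obtain ⟨k, hk⟩ := h1
    refine ⟨k, ?_⟩
    have hk' : ((ℓ₁ t - ℓ₂ t : ℝ) : ℂ) * I = ((k : ℂ) * (2 * Real.pi)) * I := by
      linear_combination hk
    have := mul_right_cancel₀ Complex.I_ne_zero hk'
    exact_mod_cast this
  have hdc : Continuous fun s => ℓ₁ s - ℓ₂ s := h₁.sub h₂
  have hd0 : ℓ₁ 0 - ℓ₂ 0 = 0 := by linarith [h0]
  intro t
  by_contra hne
  obtain ⟨k, hk⟩ := hint t
  have hk0 : k ≠ 0 := by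
    intro h
    rw [h] at hk
    simp at hk
    exact hne (by linarith)
  have hπ := Real.pi_pos
  have hiv : Set.uIcc (ℓ₁ 0 - ℓ₂ 0) (ℓ₁ t - ℓ₂ t) ⊆ (fun s => ℓ₁ s - ℓ₂ s) '' Set.uIcc 0 t :=
    intermediate_value_uIcc hdc.continuousOn
  have hmem : Real.pi ∈ Set.uIcc (ℓ₁ 0 - ℓ₂ 0) (ℓ₁ t - ℓ₂ t) ∨
      -Real.pi ∈ Set.uIcc (ℓ₁ 0 - ℓ₂ 0) (ℓ₁ t - ℓ₂ t) := by
    rw [hd0]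
    rcases lt_or_gt_of_ne hk0 with hneg | hpos
    · right
      rw [Set.mem_uIcc]
      right
      have hkle : (k:ℝ) ≤ -1 := by
        have : k ≤ -1 := by omega
        exact_mod_cast this
      exact ⟨by rw [hk]; nlinarith, by linarith⟩
    · left
      rw [Set.mem_uIcc]
      left
      have hkge : (1:ℝ) ≤ (k:ℝ) := by
        have : 1 ≤ k := by omega
        exact_mod_cast this
      exact ⟨by linarith, by rw [hk]; nlinarith⟩
  have hex : ∃ x, ℓ₁ x - ℓ₂ x = Real.pi ∨ ℓ₁ x - ℓ₂ x = -Real.pi := by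
    rcases hmem with hmem | hmem
    · obtain ⟨x, _, hx⟩ := hiv hmem
      exact ⟨x, Or.inl hx⟩
    · obtain ⟨x, _, hx⟩ := hiv hmem
      exact ⟨x, Or.inr hx⟩
  obtain ⟨x, hx⟩ := hex
  obtain ⟨k', hk'⟩ := hint x
  rcases hx with hx | hx <;> rw [hx] at hk'
  · have h1 : (1:ℝ) = 2 * k' := by
      have h2 : Real.pi * 1 = Real.pi * (2 * k') := by linarith [hk']
      have := mul_left_cancel₀ (ne_of_gt hπ) h2
      linarith
    have h2 : (1:ℤ) = 2 * k' := by exact_mod_cast h1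
    omega
  · have h1 : (-1:ℝ) = 2 * k' := by
      have h2 : Real.pi * (-1) = Real.pi * (2 * k') := by linarith [hk']
      have := mul_left_cancel₀ (ne_of_gt hπ) h2
      linarith
    have h2 : (-1:ℤ) = 2 * k' := by exact_mod_cast h1
    omega

end Aux13


open Complex Set

noncomputable section Aux13b

/-- vertex point -/
def vtx13 (n : ℕ) (i : Fin n) : Fin n → ℝ := fun j => if j = i then (1:ℝ) else 0

/-- point on edge at clamped parameter -/
def epoint13 (n : ℕ) (u v : Fin n) (t : ℝ) : Fin n → ℝ :=
  fun j => vtx13 n u j + clamp13 t * (vtx13 n v j - vtx13 n u j)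

variable {n : ℕ} {G : SimpleGraph (Fin n)}

lemma vtx13_mem (i : Fin n) : vtx13 n i ∈ graphRealization n G :=
  Or.inl ⟨i, rfl⟩

lemma seg_sub13 {u v : Fin n} (h : G.Adj u v) :
    segment ℝ (vtx13 n u) (vtx13 n v) ⊆ graphRealization n G := by
  intro y hy
  right
  refine Set.mem_iUnion.mpr ⟨(u, v), Set.mem_iUnion.mpr ⟨h, hy⟩⟩

lemma epoint13_eq (u v : Fin n) (t : ℝ) :
    epoint13 n u v t = vtx13 n u + clamp13 t • (vtx13 n v - vtx13 n u) := by
  funext j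
  simp [epoint13, Pi.add_apply, Pi.smul_apply, smul_eq_mul]

lemma epoint13_mem_segment (u v : Fin n) (t : ℝ) :
    epoint13 n u v t ∈ segment ℝ (vtx13 n u) (vtx13 n v) := by
  rw [segment_eq_image']
  exact ⟨clamp13 t, clamp13_mem t, (epoint13_eq u v t).symm⟩

lemma epoint13_memE {u v : Fin n} (h : G.Adj u v) (t : ℝ) :
    epoint13 n u v t ∈ graphRealization n G :=
  seg_sub13 h (epoint13_mem_segment u v t)

lemma vtx13_inj {i j : Fin n} (h : vtx13 n i = vtx13 n j) : i = j := by
  by_contra hne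
  have := congrFun h i
  simp [vtx13, hne] at this

lemma epoint13_zero (u v : Fin n) : epoint13 n u v 0 = vtx13 n u := by
  funext j
  have : clamp13 0 = 0 := clamp13_of_mem ⟨le_refl _, by norm_num⟩
  simp [epoint13, this]

lemma epoint13_one (u v : Fin n) : epoint13 n u v 1 = vtx13 n v := by
  funext j
  have : clamp13 1 = 1 := clamp13_of_mem ⟨by norm_num, le_refl _⟩
  simp [epoint13, this]

lemma epoint13_symm (u v : Fin n) (t : ℝ) :
    epoint13 n u v (1 - t) = epoint13 n v u t := by
  funext j
  simp only [epoint13, clamp13_one_sub]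
  ring

lemma epoint13_clamp (u v : Fin n) (t : ℝ) :
    epoint13 n u v (clamp13 t) = epoint13 n u v t := by
  funext j
  simp only [epoint13, clamp13_clamp]

lemma epoint13_continuous (u v : Fin n) : Continuous fun t => epoint13 n u v t := by
  apply continuous_pi
  intro j
  exact continuous_const.add ((clamp13_continuous).mul continuous_const)

lemma sum_vtx13 (i : Fin n) : ∑ j, vtx13 n i j = 1 := by
  simp [vtx13]

lemma sum_epoint13 (u v : Fin n) (t : ℝ) : ∑ j, epoint13 n u v t j = 1 := by
  simp only [epoint13]
  rw [Finset.sum_add_distrib, ← Finset.mul_sum, sum_vtx13]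
  have : ∑ j, (vtx13 n v j - vtx13 n u j) = 0 := by
    rw [Finset.sum_sub_distrib, sum_vtx13, sum_vtx13]; ring
  rw [this]; ring

lemma mem_segment_eq13 {u v : Fin n} (huv : u ≠ v) {y : Fin n → ℝ}
    (hy : y ∈ segment ℝ (vtx13 n u) (vtx13 n v)) :
    y v ∈ Icc (0:ℝ) 1 ∧ y = epoint13 n u v (y v) ∧
      (∀ j, j ≠ u → j ≠ v → y j = 0) ∧ y u = 1 - y v := by
  rw [segment_eq_image'] at hy
  obtain ⟨θ, hθ, hyeq⟩ := hy
  have hyeq' : y = vtx13 n u + θ • (vtx13 n v - vtx13 n u) := hyeq.symm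
  subst hyeq'
  have huv' : (vtx13 n u) v = 0 := by simp [vtx13, (Ne.symm huv)]
  have hvv : (vtx13 n v) v = 1 := by simp [vtx13]
  have hval : (vtx13 n u + θ • (vtx13 n v - vtx13 n u)) v = θ := by
    simp [Pi.add_apply, Pi.smul_apply, huv', hvv, smul_eq_mul]
  refine ⟨by rw [hval]; exact hθ, ?_, ?_, ?_⟩
  · rw [hval, epoint13_eq, clamp13_of_mem hθ]
  · intro j hju hjv
    simp [Pi.add_apply, Pi.smul_apply, smul_eq_mul, vtx13, hju, hjv]
  · rw [hval]
    have h1 : (vtx13 n u) u = 1 := by simp [vtx13]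
    have h2 : (vtx13 n v) u = 0 := by simp [vtx13, huv]
    simp [Pi.add_apply, Pi.smul_apply, smul_eq_mul, h1, h2]
    ring

lemma isCompact_graphRealization : IsCompact (graphRealization n G) := by
  apply IsCompact.union
  · exact (Set.finite_range _).isCompact
  · apply isCompact_iUnion
    intro p
    apply isCompact_iUnion
    intro _
    rw [segment_eq_image']
    apply IsCompact.image isCompact_Icc
    exact continuous_const.add (continuous_id.smul continuous_const)

/-- weighted sum over the darts of a walk -/
def wsum13 (Δ : ∀ u v : Fin n, G.Adj u v → ℝ) {a b : Fin n} (w : G.Walk a b) : ℝ :=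
  (w.darts.map (fun d => Δ d.toProd.1 d.toProd.2 d.adj)).sum

lemma wsum13_nil (Δ : ∀ u v : Fin n, G.Adj u v → ℝ) {a : Fin n} :
    wsum13 Δ (SimpleGraph.Walk.nil : G.Walk a a) = 0 := rfl

lemma wsum13_cons (Δ : ∀ u v : Fin n, G.Adj u v → ℝ) {a b c : Fin n} (h : G.Adj a b)
    (p : G.Walk b c) : wsum13 Δ (SimpleGraph.Walk.cons h p) = Δ a b h + wsum13 Δ p := by
  simp [wsum13, SimpleGraph.Walk.darts_cons]

lemma wsum13_append (Δ : ∀ u v : Fin n, G.Adj u v → ℝ) {a b c : Fin n} (p : G.Walk a b)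
    (q : G.Walk b c) : wsum13 Δ (p.append q) = wsum13 Δ p + wsum13 Δ q := by
  simp [wsum13, SimpleGraph.Walk.darts_append]

lemma wsum13_concat (Δ : ∀ u v : Fin n, G.Adj u v → ℝ) {a b c : Fin n} (p : G.Walk a b)
    (h : G.Adj b c) : wsum13 Δ (p.concat h) = wsum13 Δ p + Δ b c h := by
  rw [SimpleGraph.Walk.concat_eq_append, wsum13_append, wsum13_cons, wsum13_nil]
  ring

/-- pieces of the realization -/
def pieces13 (n : ℕ) (G : SimpleGraph (Fin n)) :
    ({q : Fin n × Fin n // G.Adj q.1 q.2} ⊕ Fin n) → Set ↥(graphRealization n G) :=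
  fun i => match i with
  | Sum.inl q => {y | (y : Fin n → ℝ) ∈ segment ℝ (vtx13 n q.1.1) (vtx13 n q.1.2)}
  | Sum.inr a => {y | (y : Fin n → ℝ) = vtx13 n a}

def pfun13 (n : ℕ) (G : SimpleGraph (Fin n)) (L : ∀ u v : Fin n, G.Adj u v → ℝ → ℝ)
    (α : Fin n → ℝ) : ({q : Fin n × Fin n // G.Adj q.1 q.2} ⊕ Fin n) →
      ↥(graphRealization n G) → ℝ :=
  fun i y => match i with
  | Sum.inl q => L q.1.1 q.1.2 q.2 ((y : Fin n → ℝ) q.1.2)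
  | Sum.inr a => α a

end Aux13b
noncomputable section Aux13c

open SimpleGraph

variable {n : ℕ} {G : SimpleGraph (Fin n)}

theorem treeLift13 (hc : G.Connected) (ha : G.IsAcyclic)
    (F : ↥(graphRealization n G) → ℂ) (hFc : Continuous F) (hF1 : ∀ y, ‖F y‖ = 1) :
    ∃ φ : ↥(graphRealization n G) → ℝ, Continuous φ ∧
      ∀ y, F y = Complex.exp (φ y * Complex.I) := by
  classical
  obtain ⟨r⟩ := hc.nonempty
  -- base lifts on each oriented edge
  have hED : ∀ (u v : Fin n) (h : G.Adj u v), ∃ ℓ : ℝ → ℝ, Continuous ℓ ∧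
      ∀ t : ℝ, F ⟨epoint13 n u v t, epoint13_memE h t⟩ = Complex.exp (ℓ t * Complex.I) := by
    intro u v h
    apply existsLift13 (fun t => F ⟨epoint13 n u v t, epoint13_memE h t⟩)
    · exact hFc.comp (Continuous.subtype_mk (epoint13_continuous u v) _)
    · intro t; exact hF1 _
    · intro t
      exact congrArg F (Subtype.ext (epoint13_clamp u v t).symm)
  choose ℓ₀ hℓ₀c hℓ₀e using hED
  set Δ : ∀ u v : Fin n, G.Adj u v → ℝ := fun u v h => ℓ₀ u v h 1 - ℓ₀ u v h 0 with hΔdef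
  set Fv : Fin n → ℂ := fun i => F ⟨vtx13 n i, vtx13_mem i⟩ with hFvdef
  have hFv1 : ∀ i, ‖Fv i‖ = 1 := fun i => hF1 _
  have hFvne : ∀ i, Fv i ≠ 0 := fun i => by
    intro h0
    have := hFv1 i
    rw [h0] at this
    simp at this
  have hval0 : ∀ (u v : Fin n) (h : G.Adj u v),
      Complex.exp (ℓ₀ u v h 0 * Complex.I) = Fv u := by
    intro u v h
    rw [← hℓ₀e u v h 0]
    exact congrArg F (Subtype.ext (epoint13_zero u v))
  have hval1 : ∀ (u v : Fin n) (h : G.Adj u v),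
      Complex.exp (ℓ₀ u v h 1 * Complex.I) = Fv v := by
    intro u v h
    rw [← hℓ₀e u v h 1]
    exact congrArg F (Subtype.ext (epoint13_one u v))
  have hΔexp : ∀ (u v : Fin n) (h : G.Adj u v),
      Complex.exp (Δ u v h * Complex.I) = Fv v / Fv u := by
    intro u v h
    have hΔval : Δ u v h = ℓ₀ u v h 1 - ℓ₀ u v h 0 := rfl
    rw [hΔval]
    push_cast
    rw [sub_mul, Complex.exp_sub, hval0, hval1]
  -- the lift increment is independent of the choice of lift
  have hΔdiff : ∀ (u v : Fin n) (h : G.Adj u v) (ℓ : ℝ → ℝ), Continuous ℓ →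
      (∀ t : ℝ, F ⟨epoint13 n u v t, epoint13_memE h t⟩ = Complex.exp (ℓ t * Complex.I)) →
      ℓ 1 - ℓ 0 = Δ u v h := by
    intro u v h ℓ hℓc' hℓe'
    have hshift : Complex.exp (((ℓ 0 : ℂ) - (ℓ₀ u v h 0 : ℂ)) * Complex.I) = 1 := by
      rw [sub_mul, Complex.exp_sub, ← hℓ₀e u v h 0, ← hℓe' 0, div_self]
      rw [hℓe' 0]
      exact Complex.exp_ne_zero _
    have huniq := liftUnique13 (ℓ₁ := ℓ) (ℓ₂ := fun t => ℓ₀ u v h t + (ℓ 0 - ℓ₀ u v h 0))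
      hℓc' ((hℓ₀c u v h).add continuous_const) ?_ (by ring)
    · have h1 : ℓ 1 = ℓ₀ u v h 1 + (ℓ 0 - ℓ₀ u v h 0) := huniq 1
      have hΔval : Δ u v h = ℓ₀ u v h 1 - ℓ₀ u v h 0 := rfl
      rw [h1, hΔval]; ring
    · intro t
      show Complex.exp ((ℓ t : ℂ) * Complex.I)
          = Complex.exp (((ℓ₀ u v h t + (ℓ 0 - ℓ₀ u v h 0) : ℝ) : ℂ) * Complex.I)
      rw [show (((ℓ₀ u v h t + (ℓ 0 - ℓ₀ u v h 0) : ℝ) : ℂ) * Complex.I)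
          = (ℓ₀ u v h t : ℂ) * Complex.I + ((ℓ 0 : ℂ) - (ℓ₀ u v h 0 : ℂ)) * Complex.I by
        push_cast; ring]
      rw [Complex.exp_add, hshift, mul_one, ← hℓ₀e u v h t, ← hℓe' t]
  have hΔsymm : ∀ (u v : Fin n) (h : G.Adj u v), Δ v u h.symm = - Δ u v h := by
    intro u v h
    have hlift : ∀ t : ℝ, F ⟨epoint13 n v u t, epoint13_memE h.symm t⟩
        = Complex.exp ((ℓ₀ u v h (1 - t)) * Complex.I) := by
      intro t
      rw [← hℓ₀e u v h (1 - t)]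
      exact congrArg F (Subtype.ext (epoint13_symm u v t).symm)
    have := hΔdiff v u h.symm (fun t => ℓ₀ u v h (1 - t))
      ((hℓ₀c u v h).comp (continuous_const.sub continuous_id)) hlift
    simp only [sub_zero, sub_self] at this
    have hΔval : Δ u v h = ℓ₀ u v h 1 - ℓ₀ u v h 0 := rfl
    rw [← this, hΔval]
    ring
  -- vertex potentials, via chosen paths from the root
  set pth : ∀ v : Fin n, G.Path r v := fun v => ((hc.preconnected r v).some).toPath
    with hpthdef
  set α : Fin n → ℝ := fun v => (Fv r).arg + wsum13 Δ (pth v).1 with hαdef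
  have hwalkexp : ∀ (a b : Fin n) (w : G.Walk a b),
      Complex.exp (wsum13 Δ w * Complex.I) = Fv b / Fv a := by
    intro a b w
    induction w with
    | nil =>
      rw [wsum13_nil]
      simp [div_self (hFvne _)]
    | @cons a c b hadj p ih =>
      rw [wsum13_cons]
      push_cast
      rw [add_mul, Complex.exp_add, hΔexp, ih, div_mul_div_comm,
        mul_comm (Fv a) (Fv c), mul_div_mul_left _ _ (hFvne c)]
  have hαexp : ∀ v, Complex.exp (α v * Complex.I) = Fv v := by
    intro v
    have hαval : α v = (Fv r).arg + wsum13 Δ ((pth v) : G.Walk r v) := rfl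
    rw [hαval]
    push_cast
    rw [add_mul, Complex.exp_add, expArg13 (hFv1 r), hwalkexp, mul_comm,
      div_mul_cancel₀ _ (hFvne r)]
  -- the key compatibility property, using acyclicity
  have hkey : ∀ (u v : Fin n) (h : G.Adj u v), α v = α u + Δ u v h := by
    intro u v h
    by_cases hv : v ∈ ((pth u) : G.Walk r u).support
    · have e1 : pth v = ⟨((pth u) : G.Walk r u).takeUntil v hv, (pth u).2.takeUntil hv⟩ :=
        ha.path_unique _ _
      have e2 : (⟨((pth u) : G.Walk r u).dropUntil v hv, (pth u).2.dropUntil hv⟩ : G.Path v u)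
          = SimpleGraph.Path.singleton h.symm := ha.path_unique _ _
      have e3 : wsum13 Δ ((pth u) : G.Walk r u)
          = wsum13 Δ (((pth u) : G.Walk r u).takeUntil v hv)
            + wsum13 Δ (((pth u) : G.Walk r u).dropUntil v hv) := by
        conv_lhs => rw [← SimpleGraph.Walk.take_spec ((pth u) : G.Walk r u) hv]
        exact wsum13_append Δ _ _
      have e4 : wsum13 Δ (((pth u) : G.Walk r u).dropUntil v hv) = Δ v u h.symm := by
        have e5 := congrArg (fun p : G.Path v u => wsum13 Δ (p : G.Walk v u)) e2
        simp only [SimpleGraph.Path.singleton] at e5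
        rw [e5, wsum13_cons, wsum13_nil]
        ring
      have e6 : α v = (Fv r).arg + wsum13 Δ (((pth u) : G.Walk r u).takeUntil v hv) := by
        have : α v = (Fv r).arg + wsum13 Δ ((pth v) : G.Walk r v) := rfl
        rw [this, e1]
      have e7 : α u = (Fv r).arg + wsum13 Δ ((pth u) : G.Walk r u) := rfl
      rw [e6, e7, e3, e4, hΔsymm u v h]
      ring
    · have hpath : (((pth u) : G.Walk r u).concat h).IsPath := by
        rw [← SimpleGraph.Walk.isPath_reverse_iff, SimpleGraph.Walk.reverse_concat]
        apply SimpleGraph.Walk.IsPath.cons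
        · rw [SimpleGraph.Walk.isPath_reverse_iff]
          exact (pth u).2
        · rw [SimpleGraph.Walk.support_reverse, List.mem_reverse]
          exact hv
      have e1 : pth v = ⟨((pth u) : G.Walk r u).concat h, hpath⟩ := ha.path_unique _ _
      have e6 : α v = (Fv r).arg + wsum13 Δ (((pth u) : G.Walk r u).concat h) := by
        have : α v = (Fv r).arg + wsum13 Δ ((pth v) : G.Walk r v) := rfl
        rw [this, e1]
      have e7 : α u = (Fv r).arg + wsum13 Δ ((pth u) : G.Walk r u) := rfl
      rw [e6, wsum13_concat, e7]
      ring
  -- shifted edge lifts matching the vertex potentials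
  have hEL : ∀ (u v : Fin n) (h : G.Adj u v), ∃ ℓ : ℝ → ℝ, Continuous ℓ ∧
      (∀ t : ℝ, F ⟨epoint13 n u v t, epoint13_memE h t⟩ = Complex.exp (ℓ t * Complex.I)) ∧
      ℓ 0 = α u ∧ ℓ 1 = α v := by
    intro u v h
    refine ⟨fun t => ℓ₀ u v h t + (α u - ℓ₀ u v h 0),
      (hℓ₀c u v h).add continuous_const, ?_, by ring, ?_⟩
    · intro t
      have hshift : Complex.exp (((α u : ℂ) - (ℓ₀ u v h 0 : ℂ)) * Complex.I) = 1 := by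
        rw [sub_mul, Complex.exp_sub, hαexp, hval0, div_self (hFvne u)]
      rw [show (((ℓ₀ u v h t + (α u - ℓ₀ u v h 0) : ℝ) : ℂ) * Complex.I)
          = (ℓ₀ u v h t : ℂ) * Complex.I + ((α u : ℂ) - (ℓ₀ u v h 0 : ℂ)) * Complex.I by
        push_cast; ring]
      rw [Complex.exp_add, hshift, mul_one]
      exact hℓ₀e u v h t
    · have hΔval : Δ u v h = ℓ₀ u v h 1 - ℓ₀ u v h 0 := rfl
      rw [hkey u v h, hΔval]
      ring
  choose ℓe hℓec hℓee hℓe0 hℓe1 using hEL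
  -- glue the pieces
  set L : ∀ u v : Fin n, G.Adj u v → ℝ → ℝ := fun u v h => ℓe u v h with hLdef
  set Cs := pieces13 n G with hCsdef
  set pf := pfun13 n G L α with hpfdef
  have hcov : ∀ y : ↥(graphRealization n G), ∃ i, y ∈ Cs i := by
    intro y
    rcases y.2 with hy | hy
    · obtain ⟨i, hi⟩ := hy
      exact ⟨Sum.inr i, hi.symm⟩
    · simp only [Set.mem_iUnion] at hy
      obtain ⟨p, hadj, hmem⟩ := hy
      exact ⟨Sum.inl ⟨p, hadj⟩, hmem⟩
  -- value at a vertex point of an edge piece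
  have hvert : ∀ (q : {q : Fin n × Fin n // G.Adj q.1 q.2}) (y : ↥(graphRealization n G))
      (w : Fin n), y ∈ Cs (Sum.inl q) → (y : Fin n → ℝ) = vtx13 n w →
      pf (Sum.inl q) y = α w := by
    rintro ⟨⟨u, v⟩, hadj⟩ y w hs hw
    have hne : u ≠ v := hadj.ne
    have hsup := (mem_segment_eq13 hne hs).2.2.1
    have hw1 : (y : Fin n → ℝ) w = 1 := by rw [hw]; simp [vtx13]
    have hwuv : w = u ∨ w = v := by
      by_contra hcon
      push_neg at hcon
      rw [hsup w hcon.1 hcon.2] at hw1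
      norm_num at hw1
    show ℓe u v hadj ((y : Fin n → ℝ) v) = α w
    rcases hwuv with rfl | rfl
    · have : (y : Fin n → ℝ) v = 0 := by rw [hw]; simp [vtx13, Ne.symm hne]
      rw [this, hℓe0]
    · rw [hw1, hℓe1]
  have hagree : ∀ i j y, y ∈ Cs i → y ∈ Cs j → pf i y = pf j y := by
    intro i j y hi hj
    rcases i with q | a
    rotate_left
    · rcases j with q' | b
      · exact (hvert q' y a hj hi).symm
      · have : a = b := vtx13_inj (hi.symm.trans hj)
        rw [this]
    rcases j with q' | b
    rotate_left
    · exact hvert q y b hi hj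
    -- two edge pieces
    obtain ⟨⟨u, v⟩, h⟩ := q
    obtain ⟨⟨u', v'⟩, h'⟩ := q'
    by_cases hca : u = u' ∧ v = v'
    · obtain ⟨rfl, rfl⟩ := hca
      rfl
    by_cases hcb : u = v' ∧ v = u'
    · obtain ⟨rfl, rfl⟩ := hcb
      -- swapped edge
      have hne : u ≠ v := h.ne
      have hstruct := mem_segment_eq13 hne hi
      have hclaim : ∀ t : ℝ, ℓe v u h' (1 - t) = ℓe u v h t := by
        apply liftUnique13 (ℓ₁ := fun t => ℓe v u h' (1 - t)) (ℓ₂ := ℓe u v h)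
          ((hℓec v u h').comp (continuous_const.sub continuous_id)) (hℓec u v h)
        · intro t
          show Complex.exp ((ℓe v u h' (1 - t) : ℂ) * Complex.I)
              = Complex.exp ((ℓe u v h t : ℂ) * Complex.I)
          rw [← hℓee v u h' (1 - t), ← hℓee u v h t]
          exact congrArg F (Subtype.ext (epoint13_symm v u t))
        · show ℓe v u h' (1 - 0) = ℓe u v h 0
          rw [sub_zero, hℓe1, hℓe0]
      show ℓe u v h ((y : Fin n → ℝ) v) = ℓe v u h' ((y : Fin n → ℝ) u)
      rw [hstruct.2.2.2, ← hclaim ((y : Fin n → ℝ) v)]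
    · -- the two edges only share at most a vertex
      have hne : u ≠ v := h.ne
      have hne' : u' ≠ v' := h'.ne
      have h3 := mem_segment_eq13 hne hi
      have h4 := mem_segment_eq13 hne' hj
      have hsum : ∑ j', (y : Fin n → ℝ) j' = 1 := by
        have := h3.2.1
        rw [this]
        exact sum_epoint13 u v _
      -- find the common vertex
      have hvtx : ∃ w : Fin n, (y : Fin n → ℝ) = vtx13 n w := by
        by_cases hyu : (y : Fin n → ℝ) u = 0
        · refine ⟨v, ?_⟩
          have hz : ∀ j', j' ≠ v → (y : Fin n → ℝ) j' = 0 := by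
            intro j' hj'
            by_cases hju : j' = u
            · rw [hju]; exact hyu
            · exact h3.2.2.1 j' hju hj'
          have hyv : (y : Fin n → ℝ) v = 1 := by
            rw [← hsum]
            rw [Finset.sum_eq_single v]
            · intro j' _ hj'
              exact hz j' hj'
            · intro habs
              exact absurd (Finset.mem_univ v) habs
          funext j'
          by_cases hj' : j' = v
          · rw [hj', hyv]; simp [vtx13]
          · rw [hz j' hj']; simp [vtx13, hj']
        · -- u is in both edges; then y v = 0 and y = vtx u
          have hyv : (y : Fin n → ℝ) v = 0 := by
            by_contra hyv
            have hu : u = u' ∨ u = v' := by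
              by_contra hcon
              push_neg at hcon
              exact hyu (h4.2.2.1 u hcon.1 hcon.2)
            have hv' : v = u' ∨ v = v' := by
              by_contra hcon
              push_neg at hcon
              exact hyv (h4.2.2.1 v hcon.1 hcon.2)
            rcases hu with hu1 | hu2
            · rcases hv' with hv1 | hv2
              · exact hne (hu1.trans hv1.symm)
              · exact hca ⟨hu1, hv2⟩
            · rcases hv' with hv1 | hv2
              · exact hcb ⟨hu2, hv1⟩
              · exact hne (hu2.trans hv2.symm)
          refine ⟨u, ?_⟩
          have hz : ∀ j', j' ≠ u → (y : Fin n → ℝ) j' = 0 := by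
            intro j' hj'
            by_cases hjv : j' = v
            · rw [hjv]; exact hyv
            · exact h3.2.2.1 j' hj' hjv
          have hyu1 : (y : Fin n → ℝ) u = 1 := by
            rw [← hsum, Finset.sum_eq_single u]
            · intro j' _ hj'
              exact hz j' hj'
            · intro habs
              exact absurd (Finset.mem_univ u) habs
          funext j'
          by_cases hj' : j' = u
          · rw [hj', hyu1]; simp [vtx13]
          · rw [hz j' hj']; simp [vtx13, hj']
      obtain ⟨w, hw⟩ := hvtx
      rw [hvert ⟨⟨u, v⟩, h⟩ y w hi hw, hvert ⟨⟨u', v'⟩, h'⟩ y w hj hw]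
  -- define the global lift
  set φ : ↥(graphRealization n G) → ℝ := fun y => pf (hcov y).choose y with hφdef
  have hφeq : ∀ i y, y ∈ Cs i → φ y = pf i y := by
    intro i y hy
    exact hagree _ i y (hcov y).choose_spec hy
  have hpfc : ∀ i, Continuous (pf i) := by
    intro i
    rcases i with q | a
    · exact (hℓec _ _ _).comp ((continuous_apply q.1.2).comp continuous_subtype_val)
    · exact continuous_const
  have hclosed : ∀ i, IsClosed (Cs i) := by
    intro i
    rcases i with q | a
    · have : IsClosed (segment ℝ (vtx13 n q.1.1) (vtx13 n q.1.2)) := by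
        rw [segment_eq_image']
        exact (isCompact_Icc.image
          (continuous_const.add (continuous_id.smul continuous_const))).isClosed
      exact this.preimage continuous_subtype_val
    · exact (isClosed_singleton).preimage continuous_subtype_val
  have hφc : Continuous φ := by
    apply LocallyFinite.continuous (locallyFinite_of_finite Cs)
    · rw [Set.eq_univ_iff_forall]
      intro y
      rw [Set.mem_iUnion]
      exact hcov y
    · exact hclosed
    · intro i
      exact ((hpfc i).continuousOn).congr (fun y hy => hφeq i y hy)
  refine ⟨φ, hφc, ?_⟩
  have hpieceval : ∀ i y, y ∈ Cs i → F y = Complex.exp (pf i y * Complex.I) := by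
    intro i y hy
    rcases i with q | a
    · obtain ⟨⟨u, v⟩, hadj⟩ := q
      have hstruct := mem_segment_eq13 hadj.ne hy
      have : F y = F ⟨epoint13 n u v ((y : Fin n → ℝ) v), epoint13_memE hadj _⟩ :=
        congrArg F (Subtype.ext hstruct.2.1)
      rw [this, hℓee]
      rfl
    · have : F y = Fv a := congrArg F (Subtype.ext hy)
      rw [this, ← hαexp]
      rfl
  intro y
  rw [hφeq (hcov y).choose y (hcov y).choose_spec]
  exact hpieceval _ y (hcov y).choose_spec

end Aux13c
noncomputable section Aux13d

open Complex

/-- the three reference directions -/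
def om13 : Fin 3 → ℂ := ![1, ⟨-(1/2), Real.sqrt 3 / 2⟩, ⟨-(1/2), -(Real.sqrt 3 / 2)⟩]

lemma om13_norm : ∀ k, ‖om13 k‖ = 1 := by
  have h3 : Real.sqrt 3 ^ 2 = 3 := Real.sq_sqrt (by norm_num)
  intro k
  fin_cases k
  · simp [om13]
  · show ‖om13 1‖ = 1
    rw [Complex.norm_def]
    rw [show om13 1 = ⟨-(1/2), Real.sqrt 3 / 2⟩ from rfl]
    rw [Complex.normSq_mk]
    rw [show (-(1/2) * -(1/2) + Real.sqrt 3 / 2 * (Real.sqrt 3 / 2) : ℝ) = 1 by nlinarith]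
    exact Real.sqrt_one
  · show ‖om13 2‖ = 1
    rw [Complex.norm_def]
    rw [show om13 2 = ⟨-(1/2), -(Real.sqrt 3 / 2)⟩ from rfl]
    rw [Complex.normSq_mk]
    rw [show (-(1/2) * -(1/2) + -(Real.sqrt 3 / 2) * -(Real.sqrt 3 / 2) : ℝ) = 1 by nlinarith]
    exact Real.sqrt_one

lemma coverS13 (z : ℂ) (hz : ‖z‖ = 1) :
    ∃ k : Fin 3, 1/4 < (z * (starRingEnd ℂ) (om13 k)).re := by
  have hsq := normSq13 hz
  by_contra hcon
  push_neg at hcon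
  have h0 := hcon 0
  have h1 := hcon 1
  have h2 := hcon 2
  have h3 : Real.sqrt 3 ^ 2 = 3 := Real.sq_sqrt (by norm_num)
  have h3' : (0:ℝ) ≤ Real.sqrt 3 := Real.sqrt_nonneg 3
  rw [show om13 0 = 1 from rfl] at h0
  rw [show om13 1 = ⟨-(1/2), Real.sqrt 3 / 2⟩ from rfl] at h1
  rw [show om13 2 = ⟨-(1/2), -(Real.sqrt 3 / 2)⟩ from rfl] at h2
  simp only [Complex.mul_re, Complex.conj_re, Complex.conj_im, map_one, Complex.one_re,
    Complex.one_im] at h0 h1 h2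
  norm_num at h0 h1 h2
  nlinarith [sq_nonneg (Real.sqrt 3 * z.im), sq_nonneg z.im, sq_nonneg z.re,
    sq_nonneg (z.re + 1/2), sq_nonneg (z.re - 1/4)]

lemma reSymm13 (z w : ℂ) : (z * (starRingEnd ℂ) w).re = (w * (starRingEnd ℂ) z).re := by
  simp only [Complex.mul_re, Complex.conj_re, Complex.conj_im]
  ring

/-- Every unimodular map on a tree lifts. -/
lemma liftOfTree13 {K : Type} [tK : TopologicalSpace K] (ht : IsTree K)
    (F : K → ℂ) (hFc : Continuous F) (hF1 : ∀ y, ‖F y‖ = 1) :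
    ∃ φ : K → ℝ, Continuous φ ∧ ∀ y, F y = Complex.exp (φ y * Complex.I) := by
  obtain ⟨n, G, hGc, hGa, ⟨e⟩⟩ := ht
  obtain ⟨ψ, hψc, hψe⟩ := treeLift13 hGc hGa (fun y => F (e.symm y))
    (hFc.comp e.symm.continuous) (fun y => hF1 _)
  refine ⟨fun y => ψ (e y), hψc.comp e.continuous, fun y => ?_⟩
  have := hψe (e y)
  rwa [e.symm_apply_apply] at this

lemma treeCompactSpace13 {K : Type} [tK : TopologicalSpace K] (ht : IsTree K) :
    CompactSpace K := by
  obtain ⟨n, G, _, _, ⟨e⟩⟩ := ht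
  haveI : CompactSpace ↥(graphRealization n G) :=
    isCompact_iff_compactSpace.mp isCompact_graphRealization
  exact e.symm.compactSpace

lemma treeT2Space13 {K : Type} [tK : TopologicalSpace K] (ht : IsTree K) :
    T2Space K := by
  obtain ⟨n, G, _, _, ⟨e⟩⟩ := ht
  exact e.isEmbedding.t2Space

end Aux13d

/-- If every open cover of a continuum X with at most 3 members admits a
𝒰-map onto a tree, then every continuous map from X to the circle is null-homotopic. -/
theorem stmt13 {X : Type*} [TopologicalSpace X] [CompactSpace X] [T2Space X]
    [ConnectedSpace X]
    (h : ∀ 𝒰 : Set (Set X), 𝒰.Finite → 𝒰.ncard ≤ 3 → (∀ u ∈ 𝒰, IsOpen u) →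
      ⋃₀ 𝒰 = Set.univ →
      ∃ (K : Type) (tK : TopologicalSpace K), @IsTree K tK ∧
        ∃ f : X → K, @Continuous X K _ tK f ∧ Function.Surjective f ∧
          ∃ 𝒱 : Set (Set K), (∀ v ∈ 𝒱, @IsOpen K tK v) ∧ ⋃₀ 𝒱 = Set.univ ∧
            ∀ v ∈ 𝒱, ∃ u ∈ 𝒰, f ⁻¹' v ⊆ u)
    (f : C(X, Metric.sphere (0 : ℂ) 1)) :
    ∃ c : Metric.sphere (0 : ℂ) 1,
      f.Homotopic (ContinuousMap.const X c) := by
  classical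
  have hmemS : ∀ z : ↥(Metric.sphere (0 : ℂ) 1), ‖(z : ℂ)‖ = 1 :=
    fun z => mem_sphere_zero_iff_norm.mp z.2
  -- the cover of the circle by three arcs
  set V : Fin 3 → Set ↥(Metric.sphere (0 : ℂ) 1) :=
    fun k => {z | 1/4 < ((z : ℂ) * (starRingEnd ℂ) (om13 k)).re} with hVdef
  have hVopen : ∀ k, IsOpen (V k) := by
    intro k
    apply isOpen_lt continuous_const
    exact Complex.continuous_re.comp (continuous_subtype_val.mul continuous_const)
  set 𝒰 : Set (Set X) := Set.range (fun k : Fin 3 => f ⁻¹' (V k)) with h𝒰def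
  have hfin : 𝒰.Finite := Set.finite_range _
  have hncard : 𝒰.ncard ≤ 3 := by
    rw [h𝒰def, ← Set.image_univ]
    refine le_trans (Set.ncard_image_le Set.finite_univ) ?_
    rw [Set.ncard_univ, Nat.card_eq_fintype_card, Fintype.card_fin]
  have hopen : ∀ u ∈ 𝒰, IsOpen u := by
    rintro u ⟨k, rfl⟩
    exact (hVopen k).preimage f.continuous
  have hcover : ⋃₀ 𝒰 = Set.univ := by
    rw [Set.eq_univ_iff_forall]
    intro x
    obtain ⟨k, hk⟩ := coverS13 (f x) (hmemS (f x))
    exact ⟨f ⁻¹' (V k), ⟨k, rfl⟩, hk⟩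
  obtain ⟨K, tK, htree, g, hgc, hgs, 𝒱, h𝒱o, h𝒱cov, h𝒱ref⟩ := h 𝒰 hfin hncard hopen hcover
  haveI : CompactSpace K := treeCompactSpace13 htree
  haveI : T2Space K := treeT2Space13 htree
  -- finite subcover of 𝒱
  have hKuniv : (Set.univ : Set K) ⊆ ⋃ v : ↥𝒱, (v : Set K) := by
    rw [← Set.sUnion_eq_iUnion, h𝒱cov]
  obtain ⟨T, hT⟩ := isCompact_univ.elim_finite_subcover (fun v : ↥𝒱 => (v : Set K))
    (fun v => h𝒱o v v.2) hKuniv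
  set U : ↥T → Set K := fun i => ((i : ↥𝒱) : Set K) with hUdef
  have hsub : (Set.univ : Set K) ⊆ ⋃ i : ↥T, U i := by
    intro y _
    have hy := hT (Set.mem_univ y)
    rw [Set.mem_iUnion₂] at hy
    obtain ⟨v, hvT, hyv⟩ := hy
    exact Set.mem_iUnion.mpr ⟨⟨v, hvT⟩, hyv⟩
  obtain ⟨ρ, hρ⟩ := PartitionOfUnity.exists_isSubordinate isClosed_univ U
    (fun i => h𝒱o _ (i : ↥𝒱).2) hsub
  have hlab : ∀ i : ↥T, ∃ k : Fin 3, g ⁻¹' (U i) ⊆ f ⁻¹' (V k) := by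
    intro i
    obtain ⟨u, hu𝒰, hsub'⟩ := h𝒱ref _ (i : ↥𝒱).2
    obtain ⟨k, rfl⟩ := hu𝒰
    exact ⟨k, hsub'⟩
  choose lab hlabs using hlab
  -- the averaged direction field on K
  set c : K → ℂ := fun y => ∑ i : ↥T, ((ρ i y : ℝ) : ℂ) * om13 (lab i) with hcdef
  have hcc : Continuous c := by
    apply continuous_finset_sum
    intro i _
    exact (Complex.continuous_ofReal.comp (ρ i).continuous).mul continuous_const
  have hsum1 : ∀ y : K, ∑ i : ↥T, ρ i y = 1 := by
    intro y
    have := ρ.sum_eq_one (Set.mem_univ y)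
    rwa [finsum_eq_sum_of_fintype] at this
  have hkey : ∀ x : X, 1/4 ≤ (c (g x) * (starRingEnd ℂ) ((f x : ℂ))).re := by
    intro x
    rw [hcdef]
    simp only []
    rw [Finset.sum_mul]
    rw [Complex.re_sum]
    have hterm : ∀ i : ↥T, ρ i (g x) * (1/4) ≤
        (((ρ i (g x) : ℝ) : ℂ) * om13 (lab i) * (starRingEnd ℂ) ((f x : ℂ))).re := by
      intro i
      rw [mul_assoc, Complex.re_ofReal_mul]
      rcases eq_or_ne (ρ i (g x)) 0 with h0 | h0
      · rw [h0]; norm_num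
      · have hmem : g x ∈ U i := hρ i (subset_closure (Function.mem_support.mpr h0))
        have hx : x ∈ f ⁻¹' (V (lab i)) := hlabs i hmem
        have : 1/4 < ((f x : ℂ) * (starRingEnd ℂ) (om13 (lab i))).re := hx
        rw [reSymm13] at this
        have hpos : 0 < ρ i (g x) := lt_of_le_of_ne (ρ.nonneg i (g x)) (Ne.symm h0)
        nlinarith
    calc (1:ℝ)/4 = (∑ i : ↥T, ρ i (g x)) * (1/4) := by rw [hsum1]; ring
    _ = ∑ i : ↥T, ρ i (g x) * (1/4) := by rw [Finset.sum_mul]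
    _ ≤ _ := Finset.sum_le_sum (fun i _ => hterm i)
  have hcne : ∀ y : K, c y ≠ 0 := by
    intro y h0
    obtain ⟨x, rfl⟩ := hgs y
    have := hkey x
    rw [h0, zero_mul] at this
    simp at this
    linarith
  -- normalize
  set Fc : K → ℂ := fun y => ((‖c y‖⁻¹ : ℝ) : ℂ) * c y with hFcdef
  have hnormne : ∀ y : K, ‖c y‖ ≠ 0 := fun y => norm_ne_zero_iff.mpr (hcne y)
  have hFc1 : ∀ y, ‖Fc y‖ = 1 := by
    intro y
    rw [hFcdef]
    simp only []
    rw [norm_mul, Complex.norm_real, Real.norm_eq_abs, _root_.abs_of_nonneg (by positivity),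
      inv_mul_cancel₀ (hnormne y)]
  have hFcc : Continuous Fc :=
    (Complex.continuous_ofReal.comp ((hcc.norm).inv₀ hnormne)).mul hcc
  obtain ⟨φK, hφKc, hφKe⟩ := liftOfTree13 htree Fc hFcc hFc1
  -- the correction term
  set w : X → ℂ := fun x => (f x : ℂ) * (starRingEnd ℂ) (Fc (g x)) with hwdef
  have hw1 : ∀ x, ‖w x‖ = 1 := by
    intro x
    rw [hwdef]
    simp only []
    rw [norm_mul, RCLike.norm_conj, hFc1, hmemS, one_mul]
  have hwre : ∀ x, 0 < (w x).re := by
    intro x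
    have heq : w x = ((‖c (g x)‖⁻¹ : ℝ) : ℂ) * ((f x : ℂ) * (starRingEnd ℂ) (c (g x))) := by
      rw [hwdef]
      simp only []
      rw [hFcdef]
      simp only []
      rw [map_mul, Complex.conj_ofReal]
      ring
    rw [heq, Complex.re_ofReal_mul]
    have h1 : 1/4 ≤ ((f x : ℂ) * (starRingEnd ℂ) (c (g x))).re := by
      rw [reSymm13]
      exact hkey x
    have h2 : 0 < ‖c (g x)‖⁻¹ := inv_pos.mpr (norm_pos_iff.mpr (hcne _))
    nlinarith
  have hwc : Continuous w := by
    rw [hwdef]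
    exact (continuous_subtype_val.comp f.continuous).mul
      (continuous_star.comp (hFcc.comp hgc))
  set φ : X → ℝ := fun x => φK (g x) + (w x).arg with hφdef
  have hφc : Continuous φ := by
    apply (hφKc.comp hgc).add
    rw [continuous_iff_continuousAt]
    intro x
    exact (Complex.continuousAt_arg (Or.inl (hwre x))).comp hwc.continuousAt
  have hlift : ∀ x, (f x : ℂ) = Complex.exp ((φ x : ℝ) * Complex.I) := by
    intro x
    rw [hφdef]
    simp only []
    push_cast
    rw [add_mul, Complex.exp_add, ← hφKe (g x), expArg13 (hw1 x), hwdef]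
    simp only []
    rw [show Fc (g x) * ((f x : ℂ) * (starRingEnd ℂ) (Fc (g x)))
        = (f x : ℂ) * (Fc (g x) * (starRingEnd ℂ) (Fc (g x))) by ring]
    rw [mulconj13 (hFc1 (g x)), mul_one]
  -- construct the homotopy to the constant map 1
  have hc₀mem : (1 : ℂ) ∈ Metric.sphere (0:ℂ) 1 := by
    rw [mem_sphere_zero_iff_norm, norm_one]
  refine ⟨⟨1, hc₀mem⟩, ⟨?_⟩⟩
  refine ContinuousMap.Homotopy.mk
    ⟨fun p => ⟨Complex.exp ((((1 - (p.1 : ℝ)) * φ p.2 : ℝ) : ℂ) * Complex.I), ?_⟩, ?_⟩ ?_ ?_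
  · rw [mem_sphere_zero_iff_norm, Complex.norm_exp_ofReal_mul_I]
  · apply Continuous.subtype_mk
    apply Complex.continuous_exp.comp
    apply Continuous.mul ?_ continuous_const
    apply Complex.continuous_ofReal.comp
    exact (continuous_const.sub (continuous_subtype_val.comp continuous_fst)).mul
      (hφc.comp continuous_snd)
  · intro x
    apply Subtype.ext
    simp only [ContinuousMap.coe_mk]
    norm_num
    exact (hlift x).symm
  · intro x
    apply Subtype.ext
    simp only [ContinuousMap.coe_mk]
    norm_num
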